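/- Let b_k be as defined and m ≥ 0 a fixed integer. Then there exists a constant C_4 = C_4(m), independent of n, such that for all sufficiently large integers g and all even n ≥ 2: g^{⌊2m/3⌋}·|b_{3g+3n/2-3-m}| ≤ C_4·|b_{3g+3n/2-3}|. -/

import Mathlib

/-- The sequence b_k (k ≥ -1) from the paper:
b_{3g} = -(6g-1)!!/(24^g g!), b_{3g-1} = ((6g+1)/(6g-1))·(6g-1)!!/(24^g g!),
b_{3g-2} = (1/2)·(6g-5)!!/(24^{g-1} (g-1)!), with (-1)!! = 1. -/
def bInt (k : ℤ) : ℚ :=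
  if k % 3 = 0 then
    -((6 * (k / 3) - 1).toNat.doubleFactorial : ℚ)
      / (24 ^ (k / 3).toNat * ((k / 3).toNat.factorial : ℚ))
  else if k % 3 = 2 then
    ((6 * (((k + 1) / 3 : ℤ) : ℚ) + 1) / (6 * (((k + 1) / 3 : ℤ) : ℚ) - 1)) *
      (((6 * ((k + 1) / 3) - 1).toNat.doubleFactorial : ℚ)
        / (24 ^ ((k + 1) / 3).toNat * (((k + 1) / 3).toNat.factorial : ℚ)))
  else
    (1 / 2 : ℚ) * (((6 * ((k + 2) / 3) - 5).toNat.doubleFactorial : ℚ)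
      / (24 ^ ((k + 2) / 3 - 1).toNat * (((k + 2) / 3 - 1).toNat.factorial : ℚ)))

lemma bInt_3h (h : ℕ) :
    bInt (3 * h) = -(((6*h - 1).doubleFactorial : ℚ)) / (24 ^ h * (h.factorial : ℚ)) := by
  have h1 : (3 * (h:ℤ)) % 3 = 0 := by omega
  have h2 : (3 * (h:ℤ)) / 3 = h := by omega
  have h3 : (6 * ((3 * (h:ℤ)) / 3) - 1).toNat = 6*h - 1 := by omega
  have h4 : ((3 * (h:ℤ)) / 3).toNat = h := by omega
  rw [bInt, if_pos h1, h3, h4]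

lemma bInt_3h_sub_one (h : ℕ) (hh : 1 ≤ h) :
    bInt (3 * h - 1) = ((6*h+1 : ℚ)/(6*h-1)) *
      (((6*h - 1).doubleFactorial : ℚ) / (24 ^ h * (h.factorial : ℚ))) := by
  have h1 : (3 * (h:ℤ) - 1) % 3 = 2 := by omega
  have h1' : ¬ (3 * (h:ℤ) - 1) % 3 = 0 := by omega
  have h2 : (3 * (h:ℤ) - 1 + 1) / 3 = h := by omega
  have h3 : (6 * (h:ℤ) - 1).toNat = 6*h - 1 := by omega
  have h4 : ((h:ℤ)).toNat = h := by omega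
  rw [bInt, if_neg h1', if_pos h1, h2, h3, h4]
  push_cast
  ring

lemma bInt_3h_sub_two (h : ℕ) (hh : 1 ≤ h) :
    bInt (3 * h - 2) = (1/2 : ℚ) * (((6*h - 5).doubleFactorial : ℚ)
      / (24 ^ (h-1) * ((h-1).factorial : ℚ))) := by
  have h1' : ¬ (3 * (h:ℤ) - 2) % 3 = 0 := by omega
  have h1'' : ¬ (3 * (h:ℤ) - 2) % 3 = 2 := by omega
  have h2 : (3 * (h:ℤ) - 2 + 2) / 3 = h := by omega
  have h3 : (6 * (h:ℤ) - 5).toNat = 6*h - 5 := by omega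
  have h4 : ((h:ℤ) - 1).toNat = h - 1 := by omega
  rw [bInt, if_neg h1', if_neg h1'', h2, h3, h4]

lemma df_step (h : ℕ) (hh : 1 ≤ h) :
    ((6*h - 1).doubleFactorial : ℚ) = (6*h-1 : ℚ) * (6*h-3 : ℚ) * ((6*h - 5).doubleFactorial : ℚ) := by
  obtain ⟨n, hn⟩ : ∃ n, 6*h = n+6 := ⟨6*h-6, by omega⟩
  have e1 : 6*h - 1 = (n+3)+2 := by omega
  have e3 : n+3 = (n+1)+2 := by omega
  have e2 : 6*h - 5 = n+1 := by omega
  rw [e1, Nat.doubleFactorial_add_two, e3, Nat.doubleFactorial_add_two, e2]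
  have hq : (6:ℚ)*h = (n:ℚ)+6 := by exact_mod_cast hn
  push_cast
  linear_combination -(6*(h:ℚ) + (n:ℚ) + 2) * ((n+1).doubleFactorial : ℚ) * hq

lemma abs_bInt_3h (h : ℕ) :
    |bInt (3 * h)| = ((6*h - 1).doubleFactorial : ℚ) / (24 ^ h * (h.factorial : ℚ)) := by
  rw [bInt_3h, neg_div, abs_neg, abs_div, abs_of_nonneg, abs_of_pos]
  · positivity
  · positivity

lemma abs_bInt_3h_sub_one (h : ℕ) (hh : 1 ≤ h) :
    |bInt (3 * h - 1)| = ((6*h+1 : ℚ)/(6*h-1)) *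
      (((6*h - 1).doubleFactorial : ℚ) / (24 ^ h * (h.factorial : ℚ))) := by
  have hq : (1 : ℚ) ≤ h := by exact_mod_cast hh
  rw [bInt_3h_sub_one h hh, abs_of_pos]
  have : (0:ℚ) < 6*h - 1 := by linarith
  positivity

lemma abs_bInt_3h_sub_two (h : ℕ) (hh : 1 ≤ h) :
    |bInt (3 * h - 2)| = (1/2 : ℚ) * (((6*h - 5).doubleFactorial : ℚ)
      / (24 ^ (h-1) * ((h-1).factorial : ℚ))) := by
  rw [bInt_3h_sub_two h hh, abs_of_pos]
  positivity

lemma R1 (h : ℕ) (hh : 1 ≤ h) : |bInt (3 * h - 1)| ≤ 2 * |bInt (3 * h)| := by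
  have hq : (1 : ℚ) ≤ h := by exact_mod_cast hh
  rw [abs_bInt_3h_sub_one h hh, abs_bInt_3h]
  have hD : (0:ℚ) < ((6*h - 1).doubleFactorial : ℚ) / (24 ^ h * (h.factorial : ℚ)) := by positivity
  have hr : ((6*h+1 : ℚ)/(6*h-1)) ≤ 2 := by
    rw [div_le_iff₀ (by linarith)]; linarith
  nlinarith

lemma fac_step (h : ℕ) (hh : 1 ≤ h) :
    (24:ℚ) ^ h * (h.factorial : ℚ) = 24 * h * (24 ^ (h-1) * ((h-1).factorial : ℚ)) := by
  cases h with
  | zero => omega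
  | succ k =>
    simp only [Nat.add_sub_cancel, Nat.factorial_succ, pow_succ]
    push_cast
    ring

lemma R2 (h : ℕ) (hh : 1 ≤ h) : (h:ℚ) * |bInt (3 * h - 2)| ≤ |bInt (3 * h - 1)| := by
  have hq : (1 : ℚ) ≤ h := by exact_mod_cast hh
  rw [abs_bInt_3h_sub_one h hh, abs_bInt_3h_sub_two h hh, df_step h hh, fac_step h hh]
  set D : ℚ := ((6*h - 5).doubleFactorial : ℚ) with hDdef
  set Q : ℚ := 24 ^ (h-1) * ((h-1).factorial : ℚ) with hQdef
  have hD : (0:ℚ) < D := by rw [hDdef]; positivity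
  have hQ : (0:ℚ) < Q := by rw [hQdef]; positivity
  have h1 : (0:ℚ) < 6*(h:ℚ) - 1 := by linarith
  have hh0 : (0:ℚ) < (h:ℚ) := by linarith
  have hR : (6*(h:ℚ)+1)/(6*(h:ℚ)-1) * ((6*(h:ℚ)-1)*(6*(h:ℚ)-3)*D / (24*(h:ℚ)*Q))
      = ((6*(h:ℚ)+1)*(6*(h:ℚ)-3)/(24*(h:ℚ))) * (D/Q) := by
    field_simp
  have hL : (h:ℚ) * (1/2 * (D/Q)) = ((h:ℚ)/2) * (D/Q) := by ring
  rw [hR, hL]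
  apply mul_le_mul_of_nonneg_right _ (by positivity)
  rw [div_le_div_iff₀ (by norm_num) (by positivity)]
  nlinarith [hq]

lemma R3 (h : ℕ) (hh : 2 ≤ h) : (h:ℚ) * |bInt (3 * h - 3)| ≤ |bInt (3 * h - 2)| := by
  have hq : (2 : ℚ) ≤ h := by exact_mod_cast hh
  have e : (3 * (h:ℤ) - 3) = 3 * ((h-1 : ℕ) : ℤ) := by push_cast [show (1:ℕ) ≤ h by omega]; ring
  rw [e, abs_bInt_3h, abs_bInt_3h_sub_two h (by omega)]
  have e2 : 6 * (h-1) - 1 = 6*h - 7 := by omega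
  have e3 : 6*h - 5 = (6*h - 7) + 2 := by omega
  rw [e2, e3, Nat.doubleFactorial_add_two]
  push_cast
  have e5 : ((6*h-7 : ℕ) : ℚ) = 6*(h:ℚ) - 7 := by
    have h7 : (7:ℕ) ≤ 6*h := by omega
    push_cast [h7]
    ring
  rw [e5]
  set D : ℚ := ((6*h - 7).doubleFactorial : ℚ) with hDdef
  set Q : ℚ := 24 ^ (h-1) * ((h-1).factorial : ℚ) with hQdef
  have hD : (0:ℚ) < D := by rw [hDdef]; positivity
  have hQ : (0:ℚ) < Q := by rw [hQdef]; positivity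
  have hL : (h:ℚ) * (D/Q) = (h:ℚ) * (D/Q) := rfl
  have hR : (1/2 : ℚ) * ((6*(h:ℚ)-7+2) * D / Q) = ((6*(h:ℚ)-5)/2) * (D/Q) := by ring
  rw [hR]
  apply mul_le_mul_of_nonneg_right _ (by positivity)
  linarith

lemma key (m : ℕ) : ∀ H : ℕ, m + 2 ≤ H →
    ((H : ℚ) - m) ^ ((2*m)/3) * |bInt (3*(H:ℤ) - m)| ≤ 2^m * |bInt (3*(H:ℤ))| := by
  induction m with
  | zero => intro H hH; simp
  | succ m ih =>
    intro H hH
    have ih' := ih H (by omega)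
    have hmH : ((m:ℚ) + 1) ≤ (H:ℚ) := by exact_mod_cast (show m + 1 ≤ H by omega)
    have hpow : ((H:ℚ) - (m+1:ℕ)) ^ ((2*m)/3) ≤ ((H:ℚ) - m) ^ ((2*m)/3) := by
      apply pow_le_pow_left₀ (by push_cast; linarith) (by push_cast; linarith)
    have hHm : (0:ℚ) ≤ (H:ℚ) - m := by linarith
    rcases (show m % 3 = 0 ∨ m % 3 = 1 ∨ m % 3 = 2 by omega) with hr | hr | hr
    · -- trivial step, R1
      set h : ℕ := H - m/3 with hdef
      have hexp : (2*(m+1))/3 = (2*m)/3 := by omega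
      have hc1 : 3*(H:ℤ) - (m+1:ℕ) = 3*(h:ℤ) - 1 := by omega
      have hc2 : 3*(H:ℤ) - (m:ℕ) = 3*(h:ℤ) := by omega
      rw [hexp, hc1]
      rw [hc2] at ih'
      have hR := R1 h (by omega)
      calc ((H:ℚ) - (m+1:ℕ)) ^ ((2*m)/3) * |bInt (3*(h:ℤ) - 1)|
          ≤ ((H:ℚ) - m) ^ ((2*m)/3) * (2 * |bInt (3*(h:ℤ))|) :=
            mul_le_mul hpow hR (abs_nonneg _) (pow_nonneg hHm _)
        _ = 2 * (((H:ℚ) - m) ^ ((2*m)/3) * |bInt (3*(h:ℤ))|) := by ring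
        _ ≤ 2 * (2^m * |bInt (3*(H:ℤ))|) := by linarith
        _ = 2^(m+1) * |bInt (3*(H:ℤ))| := by ring
    · -- R2 step
      set h : ℕ := H - m/3 with hdef
      have hexp : (2*(m+1))/3 = (2*m)/3 + 1 := by omega
      have hc1 : 3*(H:ℤ) - (m+1:ℕ) = 3*(h:ℤ) - 2 := by omega
      have hc2 : 3*(H:ℤ) - (m:ℕ) = 3*(h:ℤ) - 1 := by omega
      rw [hexp, hc1]
      rw [hc2] at ih'
      have hR := R2 h (by omega)
      have hle : (H:ℚ) - (m+1:ℕ) ≤ (h:ℚ) := by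
        have : H ≤ h + (m+1) := by omega
        have := (show ((H:ℚ)) ≤ (h:ℚ) + (m+1) by exact_mod_cast this)
        push_cast
        linarith
      have hnn : (0:ℚ) ≤ (H:ℚ) - (m+1:ℕ) := by push_cast; linarith
      calc ((H:ℚ) - (m+1:ℕ)) ^ ((2*m)/3 + 1) * |bInt (3*(h:ℤ) - 2)|
          = ((H:ℚ) - (m+1:ℕ)) ^ ((2*m)/3) * (((H:ℚ) - (m+1:ℕ)) * |bInt (3*(h:ℤ) - 2)|) := by
            rw [pow_succ]; ring
        _ ≤ ((H:ℚ) - m) ^ ((2*m)/3) * ((h:ℚ) * |bInt (3*(h:ℤ) - 2)|) := by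
            apply mul_le_mul hpow (mul_le_mul_of_nonneg_right hle (abs_nonneg _))
              (mul_nonneg hnn (abs_nonneg _)) (pow_nonneg hHm _)
        _ ≤ ((H:ℚ) - m) ^ ((2*m)/3) * |bInt (3*(h:ℤ) - 1)| := by
            apply mul_le_mul_of_nonneg_left hR (pow_nonneg hHm _)
        _ ≤ 2^m * |bInt (3*(H:ℤ))| := ih'
        _ ≤ 2^(m+1) * |bInt (3*(H:ℤ))| := by
            have h2 : (2:ℚ)^m ≤ 2^(m+1) := by
              apply pow_le_pow_right₀ (by norm_num) (by omega)
            exact mul_le_mul_of_nonneg_right h2 (abs_nonneg _)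
    · -- R3 step
      set h : ℕ := H - m/3 with hdef
      have hexp : (2*(m+1))/3 = (2*m)/3 + 1 := by omega
      have hc1 : 3*(H:ℤ) - (m+1:ℕ) = 3*(h:ℤ) - 3 := by omega
      have hc2 : 3*(H:ℤ) - (m:ℕ) = 3*(h:ℤ) - 2 := by omega
      rw [hexp, hc1]
      rw [hc2] at ih'
      have hR := R3 h (by omega)
      have hle : (H:ℚ) - (m+1:ℕ) ≤ (h:ℚ) := by
        have : H ≤ h + (m+1) := by omega
        have := (show ((H:ℚ)) ≤ (h:ℚ) + (m+1) by exact_mod_cast this)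
        push_cast
        linarith
      have hnn : (0:ℚ) ≤ (H:ℚ) - (m+1:ℕ) := by push_cast; linarith
      calc ((H:ℚ) - (m+1:ℕ)) ^ ((2*m)/3 + 1) * |bInt (3*(h:ℤ) - 3)|
          = ((H:ℚ) - (m+1:ℕ)) ^ ((2*m)/3) * (((H:ℚ) - (m+1:ℕ)) * |bInt (3*(h:ℤ) - 3)|) := by
            rw [pow_succ]; ring
        _ ≤ ((H:ℚ) - m) ^ ((2*m)/3) * ((h:ℚ) * |bInt (3*(h:ℤ) - 3)|) := by
            apply mul_le_mul hpow (mul_le_mul_of_nonneg_right hle (abs_nonneg _))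
              (mul_nonneg hnn (abs_nonneg _)) (pow_nonneg hHm _)
        _ ≤ ((H:ℚ) - m) ^ ((2*m)/3) * |bInt (3*(h:ℤ) - 2)| := by
            apply mul_le_mul_of_nonneg_left hR (pow_nonneg hHm _)
        _ ≤ 2^m * |bInt (3*(H:ℤ))| := ih'
        _ ≤ 2^(m+1) * |bInt (3*(H:ℤ))| := by
            have h2 : (2:ℚ)^m ≤ 2^(m+1) := by
              apply pow_le_pow_right₀ (by norm_num) (by omega)
            exact mul_le_mul_of_nonneg_right h2 (abs_nonneg _)


/-- for fixed m ≥ 0 there is a constant C₄ = C₄(m), independent of n,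
such that for all sufficiently large g and all even n ≥ 2:
g^⌊2m/3⌋·|b_{3g+3n/2-3-m}| ≤ C₄·|b_{3g+3n/2-3}|. -/
theorem stmt19 (m : ℕ) :
    ∃ C4 : ℚ, 0 < C4 ∧ ∃ G0 : ℕ, ∀ g : ℕ, G0 ≤ g → ∀ n : ℕ, Even n → 2 ≤ n →
      (g : ℚ) ^ ((2 * m) / 3) * |bInt (3 * (g : ℤ) + 3 * ((n : ℤ) / 2) - 3 - m)|
        ≤ C4 * |bInt (3 * (g : ℤ) + 3 * ((n : ℤ) / 2) - 3)| := by
  refine ⟨4^m, by positivity, 2*m + 5, fun g hg n hn hn2 => ?_⟩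
  obtain ⟨t, ht⟩ := hn
  have ht1 : 1 ≤ t := by omega
  have hdiv : (n:ℤ)/2 = (t:ℤ) := by omega
  set H : ℕ := g + t - 1 with hHdef
  have e1 : 3 * (g:ℤ) + 3 * ((n:ℤ)/2) - 3 - m = 3*(H:ℤ) - m := by rw [hdiv]; omega
  have e2 : 3 * (g:ℤ) + 3 * ((n:ℤ)/2) - 3 = 3*(H:ℤ) := by rw [hdiv]; omega
  rw [e1, e2]
  have hkey := key m H (by omega)
  have hgH : (g:ℚ) ≤ 2*((H:ℚ) - m) := by
    have : g + 2*m + 2 ≤ 2*H := by omega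
    have hc : (g:ℚ) + 2*m + 2 ≤ 2*H := by exact_mod_cast this
    linarith
  have hE : (2*m)/3 ≤ m := by omega
  calc (g:ℚ) ^ ((2*m)/3) * |bInt (3*(H:ℤ) - m)|
      ≤ (2*((H:ℚ) - m)) ^ ((2*m)/3) * |bInt (3*(H:ℤ) - m)| :=
        mul_le_mul_of_nonneg_right (pow_le_pow_left₀ (by positivity) hgH _) (abs_nonneg _)
    _ = 2^((2*m)/3) * (((H:ℚ) - m) ^ ((2*m)/3) * |bInt (3*(H:ℤ) - m)|) := by
        rw [mul_pow]; ring
    _ ≤ 2^((2*m)/3) * (2^m * |bInt (3*(H:ℤ))|) :=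
        mul_le_mul_of_nonneg_left hkey (by positivity)
    _ = (2^((2*m)/3) * 2^m) * |bInt (3*(H:ℤ))| := by ring
    _ ≤ (2^m * 2^m) * |bInt (3*(H:ℤ))| := by
        have h2 : (2:ℚ)^((2*m)/3) ≤ 2^m := pow_le_pow_right₀ (by norm_num) hE
        exact mul_le_mul_of_nonneg_right
          (mul_le_mul_of_nonneg_right h2 (by positivity)) (abs_nonneg _)
    _ = 4^m * |bInt (3*(H:ℤ))| := by rw [← mul_pow]; norm_num
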